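/- Let Q be a nondegenerate quadratic form on V and let X* = (X^{≥a})_{a∈ℤ} be a Q-filtration of V. Then for every a ≤ 0 one has (X^{≥a})^⊥ = X^{≥1−a} ⊕ R (direct sum) and X^{≥1−a} = (X^{≥a})^⊥ ∩ Q^{−1}(0). -/

import Mathlib

open QuadraticMap

variable {k V : Type*}

/-- The perpendicular of a set `S ⊆ V` with respect to the bilinear form
`⟨x,y⟩ = Q(x+y) - Q x - Q y` associated to a quadratic form `Q`. -/
def perp [Field k] [AddCommGroup V] [Module k V] (Q : QuadraticForm k V) (S : Set V) :
    Submodule k V where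
  carrier := {x | ∀ y ∈ S, polar Q x y = 0}
  add_mem' := by
    intro a b ha hb y hy
    rw [polar_add_left, ha y hy, hb y hy, add_zero]
  zero_mem' := by
    intro y hy
    simp [polar]
  smul_mem' := by
    intro c a ha y hy
    rw [polar_smul_left, ha y hy, smul_zero]

/-- The radical `R = {x ∈ V : ⟨x, V⟩ = 0}` of the bilinear form associated to `Q`. -/
def rad [Field k] [AddCommGroup V] [Module k V] (Q : QuadraticForm k V) : Submodule k V :=
  perp Q Set.univ

/-- `Q` is nondegenerate: its restriction to the radical of the associated bilinear
form is injective. -/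
def QNondeg [Field k] [AddCommGroup V] [Module k V] (Q : QuadraticForm k V) : Prop :=
  Set.InjOn Q (rad Q : Set V)

/-- `𝓜̃_Q`: the set of nilpotent endomorphisms `N` with `Q(Nx) = -⟨x, Nx⟩` for all `x`
(equivalently, `1 + N` is a unipotent element of the orthogonal group `O_Q`). -/
def Mtilde [Field k] [AddCommGroup V] [Module k V] (Q : QuadraticForm k V) :
    Set (Module.End k V) :=
  {N | IsNilpotent N ∧ ∀ x, Q (N x) = - polar Q x (N x)}

/-- A `Q`-filtration of `V`: a decreasing family of subspaces, equal to `V` for small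
indices and to `0` for large indices, such that for every `a ≥ 1` the form `Q` vanishes
on `X^{≥a}` and `X^{≥1-a} = (X^{≥a})^⊥`. -/
def IsQFiltration [Field k] [AddCommGroup V] [Module k V] (Q : QuadraticForm k V)
    (X : ℤ → Submodule k V) : Prop :=
  (∀ a : ℤ, X (a + 1) ≤ X a) ∧ (∃ a : ℤ, X a = ⊤) ∧ (∃ a : ℤ, X a = ⊥) ∧
    ∀ a : ℤ, 1 ≤ a → (∀ x ∈ X a, Q x = 0) ∧ X (1 - a) = perp Q (X a : Set V)

section helpers
variable [Field k] [AddCommGroup V] [Module k V] (Q : QuadraticForm k V)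

lemma mem_perp_iff' {S : Set V} {x : V} : x ∈ perp Q S ↔ ∀ y ∈ S, polar Q x y = 0 := Iff.rfl

lemma polarBilin_isRefl' : LinearMap.IsRefl (Q.polarBilin) := fun x y h => by
  rw [polarBilin_apply_apply] at h ⊢
  rwa [polar_comm]

lemma perp_eq' (W : Submodule k V) :
    perp Q (W : Set V) = LinearMap.BilinForm.orthogonal Q.polarBilin W := by
  ext x
  rw [mem_perp_iff', LinearMap.BilinForm.mem_orthogonal_iff]
  constructor
  · intro h y hy
    have := h y hy
    rw [polar_comm] at this
    exact this
  · intro h y hy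
    have := h y hy
    rw [polarBilin_apply_apply, polar_comm] at this
    exact this

lemma rad_eq' : rad Q = LinearMap.BilinForm.orthogonal Q.polarBilin ⊤ := by
  rw [rad, ← Submodule.top_coe (R := k) (M := V), perp_eq']

lemma perp_perp' [FiniteDimensional k V] (W : Submodule k V) :
    perp Q ((perp Q (W : Set V) : Submodule k V) : Set V) = W ⊔ rad Q := by
  have hrefl := polarBilin_isRefl' Q
  set B := Q.polarBilin with hB
  rw [perp_eq', perp_eq', rad_eq']
  have hle : W ⊔ LinearMap.BilinForm.orthogonal B ⊤ ≤
      LinearMap.BilinForm.orthogonal B (LinearMap.BilinForm.orthogonal B W) :=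
    sup_le (LinearMap.BilinForm.le_orthogonal_orthogonal hrefl)
      (LinearMap.BilinForm.orthogonal_le le_top)
  refine (Submodule.eq_of_le_of_finrank_le hle ?_).symm
  have h1 := LinearMap.BilinForm.finrank_add_finrank_orthogonal (B := B) hrefl W
  have h2 := LinearMap.BilinForm.finrank_add_finrank_orthogonal (B := B) hrefl
    (LinearMap.BilinForm.orthogonal B W)
  have hinf : LinearMap.BilinForm.orthogonal B W ⊓ LinearMap.BilinForm.orthogonal B ⊤ =
      LinearMap.BilinForm.orthogonal B ⊤ :=
    inf_eq_right.mpr (LinearMap.BilinForm.orthogonal_le le_top)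
  rw [hinf] at h2
  have h3 := Submodule.finrank_sup_add_finrank_inf_eq W (LinearMap.BilinForm.orthogonal B ⊤)
  omega

end helpers

/-- for a `Q`-filtration and `a ≤ 0`, `(X^{≥a})^⊥ = X^{≥1-a} ⊕ R` (a direct
sum) and `X^{≥1-a} = (X^{≥a})^⊥ ∩ Q⁻¹(0)`. -/
theorem stmt7 [Field k] [AddCommGroup V] [Module k V] [FiniteDimensional k V]
    (Q : QuadraticForm k V) (hQ : QNondeg Q)
    (X : ℤ → Submodule k V) (hX : IsQFiltration Q X) :
    ∀ a : ℤ, a ≤ 0 →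
      perp Q (X a : Set V) = X (1 - a) ⊔ rad Q ∧
      Disjoint (X (1 - a)) (rad Q) ∧
      (X (1 - a) : Set V) = {x : V | x ∈ perp Q (X a : Set V) ∧ Q x = 0} := by
  intro a ha
  have hb : (1 : ℤ) ≤ 1 - a := by omega
  obtain ⟨hvan, hperp⟩ := hX.2.2.2 (1 - a) hb
  have hXa : (X a : Submodule k V) = perp Q ((X (1 - a) : Submodule k V) : Set V) := by
    have h : (1 : ℤ) - (1 - a) = a := by ring
    rwa [h] at hperp
  have part1 : perp Q ((X a : Submodule k V) : Set V) = X (1 - a) ⊔ rad Q := by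
    rw [hXa, perp_perp']
  have part2 : Disjoint (X (1 - a)) (rad Q) := by
    rw [Submodule.disjoint_def]
    intro x hx1 hx2
    exact hQ hx2 ((rad Q).zero_mem) (by rw [hvan x hx1, QuadraticMap.map_zero])
  refine ⟨part1, part2, ?_⟩
  ext x
  constructor
  · intro hx
    refine ⟨?_, hvan x hx⟩
    rw [part1]
    exact Submodule.mem_sup_left hx
  · rintro ⟨hx, hQx⟩
    rw [part1] at hx
    obtain ⟨y, hy, r, hr, hyr⟩ := Submodule.mem_sup.mp hx
    have hr0 : polar Q y r = 0 := by
      rw [polar_comm]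
      exact hr y (Set.mem_univ y)
    have hQr : Q r = 0 := by
      have hpol := hr0
      rw [polar] at hpol
      rw [hyr, hQx, hvan y hy] at hpol
      simpa using hpol
    have hrz : r = 0 := hQ hr ((rad Q).zero_mem) (by rw [hQr, QuadraticMap.map_zero])
    show x ∈ X (1 - a)
    rw [← hyr, hrz, add_zero]
    exact hy
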